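/- Let G be a plane graph reduced with respect to Rules 1 and 2, let D be a dominating set of G, and let R be a maximal D-region decomposition. If u ∈ N1(v) for some v ∈ D, then u belongs to V(R), the union of the vertex sets of the regions of R. -/

import Mathlib

open Set

variable {V : Type*}

/-- Closed neighborhood N[v]. -/
def closedNbr (G : SimpleGraph V) (v : V) : Set V := insert v (G.neighborSet v)

/-- N1(v) = {u ∈ N(v) : N(u) \ N[v] ≠ ∅}. -/
def N1 (G : SimpleGraph V) (v : V) : Set V :=
  {u | u ∈ G.neighborSet v ∧ (G.neighborSet u \ closedNbr G v).Nonempty}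

/-- N2(v) = {u ∈ N(v) \ N1(v) : N(u) ∩ N1(v) ≠ ∅}. -/
def N2 (G : SimpleGraph V) (v : V) : Set V :=
  {u | u ∈ G.neighborSet v \ N1 G v ∧ (G.neighborSet u ∩ N1 G v).Nonempty}

/-- N3(v) = N(v) \ (N1(v) ∪ N2(v)). -/
def N3 (G : SimpleGraph V) (v : V) : Set V :=
  G.neighborSet v \ (N1 G v ∪ N2 G v)

/-- N(v,w) = N(v) ∪ N(w). -/
def nbrP (G : SimpleGraph V) (v w : V) : Set V := G.neighborSet v ∪ G.neighborSet w

/-- N[v,w] = N[v] ∪ N[w]. -/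
def closedNbrP (G : SimpleGraph V) (v w : V) : Set V := closedNbr G v ∪ closedNbr G w

/-- N1(v,w) = {u ∈ N(v,w) : N(u) \ N[v,w] ≠ ∅}. -/
def N1p (G : SimpleGraph V) (v w : V) : Set V :=
  {u | u ∈ nbrP G v w ∧ (G.neighborSet u \ closedNbrP G v w).Nonempty}

/-- N2(v,w) = {u ∈ N(v,w) \ N1(v,w) : N(u) ∩ N1(v,w) ≠ ∅}. -/
def N2p (G : SimpleGraph V) (v w : V) : Set V :=
  {u | u ∈ nbrP G v w \ N1p G v w ∧ (G.neighborSet u ∩ N1p G v w).Nonempty}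

/-- N3(v,w) = N(v,w) \ (N1(v,w) ∪ N2(v,w)). -/
def N3p (G : SimpleGraph V) (v w : V) : Set V :=
  nbrP G v w \ (N1p G v w ∪ N2p G v w)

/-- D is a dominating set: every vertex outside D has a neighbor in D. -/
def IsDomSet (G : SimpleGraph V) (D : Set V) : Prop :=
  ∀ u, u ∉ D → ∃ d ∈ D, G.Adj u d

/-- The domination number γ(G). -/
noncomputable def domNum (G : SimpleGraph V) : ℕ :=
  sInf {n | ∃ D : Set V, IsDomSet G D ∧ D.ncard = n}

/-- A planar embedding of the simple graph `G`: vertices are placed at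
distinct points of the plane, every edge `s(u,v)` is drawn as a simple arc
(`curve s(u,v)`) between the positions of its endpoints, two distinct edge
curves meet only at positions of common endpoints, and no curve passes
through the position of a non-endpoint vertex. -/
structure PlaneEmb (G : SimpleGraph V) where
  pos : V → ℝ × ℝ
  pos_inj : Function.Injective pos
  curve : Sym2 V → Set (ℝ × ℝ)
  curve_path : ∀ u v : V, G.Adj u v → ∃ p : Path (pos u) (pos v),
      Function.Injective ⇑p ∧ Set.range ⇑p = curve s(u, v)
  curve_inter : ∀ e f : Sym2 V, e ∈ G.edgeSet → f ∈ G.edgeSet → e ≠ f →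
      curve e ∩ curve f ⊆ {z | ∃ x : V, x ∈ e ∧ x ∈ f ∧ pos x = z}
  curve_vert : ∀ e ∈ G.edgeSet, ∀ x : V, pos x ∈ curve e → x ∈ e

variable {G : SimpleGraph V}

/-- A region `R(v,w)` between two vertices `v` and `w` of a plane graph:
a closed subset of the plane whose boundary is formed by (the curves of the
edges of) two simple paths of length at most three connecting `v` and `w`,
and such that every vertex strictly inside the region (i.e. not on the two
boundary paths) belongs to `N(v,w) = N(v) ∪ N(w)`. -/
structure Region (emb : PlaneEmb G) (v w : V) where
  p1 : G.Walk v w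
  p2 : G.Walk v w
  p1_path : p1.IsPath
  p2_path : p2.IsPath
  p1_len : p1.length ≤ 3
  p2_len : p2.length ≤ 3
  area : Set (ℝ × ℝ)
  area_closed : IsClosed area
  boundary_eq : frontier area =
      ⋃ e ∈ {e : Sym2 V | e ∈ p1.edges ∨ e ∈ p2.edges}, emb.curve e
  boundary_sub :
      (⋃ e ∈ {e : Sym2 V | e ∈ p1.edges ∨ e ∈ p2.edges}, emb.curve e) ⊆ area
  endpoints_mem : emb.pos v ∈ area ∧ emb.pos w ∈ area
  inner_nbr : ∀ u : V, emb.pos u ∈ area → u ∉ p1.support → u ∉ p2.support →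
      u ∈ G.neighborSet v ∪ G.neighborSet w

/-- The vertex set `V(R)` of a region: all vertices sitting inside or on the
boundary of the region. -/
def Region.verts {emb : PlaneEmb G} {v w : V} (R : Region emb v w) : Set V :=
  {u | emb.pos u ∈ R.area}

/-- A region together with its pair of endpoints. -/
structure RegionAt (emb : PlaneEmb G) where
  v : V
  w : V
  R : Region emb v w

/-- `V(𝓡)`: the union of the vertex sets of the regions of a set of regions. -/
def vertsOf {emb : PlaneEmb G} (S : Set (RegionAt emb)) : Set V :=
  ⋃ r ∈ S, r.R.verts

/-- A `D`-region decomposition: a set of regions between pairs of vertices of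
`D`, such that no region contains a vertex of `D` other than its endpoints,
and no two regions intersect (though they may touch on their boundaries). -/
structure IsDecomp {emb : PlaneEmb G} (D : Set V) (S : Set (RegionAt emb)) : Prop where
  endpoints : ∀ r ∈ S, r.v ∈ D ∧ r.w ∈ D
  no_inner : ∀ r ∈ S, r.R.verts ∩ D ⊆ {r.v, r.w}
  noncross : ∀ r ∈ S, ∀ r' ∈ S, r ≠ r' →
      interior r.R.area ∩ interior r'.R.area = ∅

/-- A maximal `D`-region decomposition: no further region can be added so
that the result is again a `D`-region decomposition covering strictly more
vertices. -/
def IsMaxDecomp {emb : PlaneEmb G} (D : Set V) (S : Set (RegionAt emb)) : Prop :=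
  IsDecomp D S ∧
  ∀ r : RegionAt emb, IsDecomp D (insert r S) →
    vertsOf (insert r S) ⊆ vertsOf S

/-- `G` is reduced with respect to Rules 1 and 2 (characterized by the
properties used in the paper): for every vertex `v`, `N3(v)` contains at most
a single gadget vertex of degree one, and for every pair of distinct vertices
`v, w` with `N3(v,w) ≠ ∅` there is a single vertex in `N2(v,w) ∪ N3(v,w)`
dominating all of `N3(v,w)`. -/
def Reduced (G : SimpleGraph V) : Prop :=
  (∀ v : V, (N3 G v).Subsingleton ∧
      ∀ u ∈ N3 G v, (G.neighborSet u).ncard = 1) ∧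
  (∀ v w : V, v ≠ w → (N3p G v w).Nonempty →
      ∃ x ∈ N2p G v w ∪ N3p G v w, N3p G v w ⊆ closedNbr G x)


section ArcLemmas
open Metric Pointwise

lemma punctured_ball_preconnected (z q : ℝ × ℝ) {ε : ℝ} (hε : 0 < ε) :
    IsPreconnected (Metric.ball z ε \ {q}) := by
  have hrank : 1 < Module.rank ℝ (ℝ × ℝ) := by
    rw [rank_prod', Module.rank_self]
    norm_num
  by_cases hq : q ∈ Metric.ball z ε
  · set ψ : (ℝ × ℝ) ≃ₜ (ℝ × ℝ) :=
      (Homeomorph.smulOfNeZero ε hε.ne').trans (Homeomorph.addLeft z) with hψ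
    have hψball : ψ '' Metric.ball 0 1 = Metric.ball z ε := by
      have h1 : ε • Metric.ball (0 : ℝ × ℝ) 1 = Metric.ball 0 ε := by
        rw [_root_.smul_ball hε.ne', smul_zero, Real.norm_of_nonneg hε.le, mul_one]
      calc ψ '' Metric.ball 0 1 = (z + ·) '' (ε • Metric.ball (0:ℝ×ℝ) 1) := by
            rw [← Set.image_smul, Set.image_image]; rfl
        _ = (z + ·) '' Metric.ball (0:ℝ×ℝ) ε := by rw [h1]
        _ = z +ᵥ Metric.ball (0:ℝ×ℝ) ε := by rw [← Set.image_vadd]; rfl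
        _ = Metric.ball z ε := by rw [Metric.vadd_ball]; simp
    have hc : ψ.symm q ∈ Metric.ball (0 : ℝ × ℝ) 1 := by
      rw [← hψball] at hq
      obtain ⟨x, hx, hxe⟩ := hq
      rwa [← hxe, Homeomorph.symm_apply_apply]
    set c := ψ.symm q with hcdef
    have key : IsPathConnected (Metric.ball (0 : ℝ × ℝ) 1 \ {c}) := by
      set d := (Homeomorph.unitBall (E := ℝ × ℝ)).symm ⟨c, hc⟩ with hd
      have hdc := isPathConnected_compl_singleton_of_one_lt_rank hrank d
      have himg := hdc.image
        (f := fun e => ((Homeomorph.unitBall (E := ℝ × ℝ) e : Metric.ball (0:ℝ×ℝ) 1) : ℝ × ℝ))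
        (continuous_subtype_val.comp (Homeomorph.unitBall (E := ℝ × ℝ)).continuous)
      have hset : (fun e => ((Homeomorph.unitBall (E := ℝ × ℝ) e : Metric.ball (0:ℝ×ℝ) 1) : ℝ × ℝ))
          '' {d}ᶜ = Metric.ball (0:ℝ×ℝ) 1 \ {c} := by
        ext w
        constructor
        · rintro ⟨e, he, rfl⟩
          refine ⟨(Homeomorph.unitBall (E := ℝ × ℝ) e).2, ?_⟩
          intro hwc
          apply he
          have : (Homeomorph.unitBall (E := ℝ × ℝ)) e = ⟨c, hc⟩ := Subtype.ext hwc
          rw [hd, ← this, Homeomorph.symm_apply_apply]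
          exact rfl
        · rintro ⟨hw, hwc⟩
          refine ⟨(Homeomorph.unitBall (E := ℝ × ℝ)).symm ⟨w, hw⟩, ?_, by simp⟩
          intro hcon
          apply hwc
          have := congrArg (Homeomorph.unitBall (E := ℝ × ℝ)) hcon
          rw [Homeomorph.apply_symm_apply, hd, Homeomorph.apply_symm_apply] at this
          exact congrArg Subtype.val this
      rwa [hset] at himg
    have h2 := key.image ψ.continuous
    rw [Set.image_diff ψ.injective, hψball, Set.image_singleton, hcdef,
      Homeomorph.apply_symm_apply] at h2
    exact h2.isConnected.isPreconnected
  · rw [Set.diff_singleton_eq_self hq]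
    exact (convex_ball z ε).isPreconnected

lemma arc_interior_empty {x y : ℝ × ℝ} (f : Path x y) (hf : Function.Injective ⇑f) :
    interior (Set.range ⇑f) = ∅ := by
  by_contra h
  obtain ⟨z, hz⟩ := Set.nonempty_iff_ne_empty.mpr h
  obtain ⟨ε, hε, hball⟩ := Metric.isOpen_iff.1 isOpen_interior z hz
  have hballr : Metric.ball z ε ⊆ Set.range ⇑f := hball.trans interior_subset
  obtain ⟨s, hs⟩ := interior_subset hz
  have hT : IsOpen (⇑f ⁻¹' Metric.ball z ε) := (Metric.isOpen_ball).preimage f.continuous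
  have hsT : s ∈ ⇑f ⁻¹' Metric.ball z ε := by
    simp [Set.mem_preimage, hs, Metric.mem_ball_self hε]
  obtain ⟨η, hη, hηsub⟩ := Metric.isOpen_iff.1 hT s hsT
  set T := ⇑f ⁻¹' Metric.ball z ε with hTdef
  obtain ⟨s1, hs01⟩ := s
  set a : ℝ := max 0 (s1 - η) with ha
  set b : ℝ := min 1 (s1 + η) with hb
  have hab : a < b := by
    have h1 : s1 ≤ 1 := hs01.2
    have h0 : 0 ≤ s1 := hs01.1
    apply max_lt <;> apply lt_min <;> linarith
  have hmemT : ∀ r : ℝ, a < r → r < b → ∃ hr : r ∈ unitInterval, (⟨r, hr⟩ : unitInterval) ∈ T := by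
    intro r har hrb
    have h0a : (0:ℝ) ≤ a := le_max_left _ _
    have hb1 : b ≤ 1 := min_le_left _ _
    have hr : r ∈ unitInterval := ⟨by linarith, by linarith⟩
    refine ⟨hr, hηsub ?_⟩
    rw [Metric.mem_ball, Subtype.dist_eq, Real.dist_eq, abs_sub_lt_iff]
    have h1 : s1 - η ≤ a := le_max_right _ _
    have h2 : b ≤ s1 + η := min_le_right _ _
    constructor <;> linarith
  set t : ℝ := (a + b) / 2 with htdef
  set t1 : ℝ := (3 * a + b) / 4 with ht1def
  set t2 : ℝ := (a + 3 * b) / 4 with ht2def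
  obtain ⟨hmt, htT⟩ := hmemT t (by rw [htdef]; linarith) (by rw [htdef]; linarith)
  obtain ⟨hmt1, ht1T⟩ := hmemT t1 (by rw [ht1def]; linarith) (by rw [ht1def]; linarith)
  obtain ⟨hmt2, ht2T⟩ := hmemT t2 (by rw [ht2def]; linarith) (by rw [ht2def]; linarith)
  set tstar : unitInterval := ⟨t, hmt⟩ with htstar
  have himg : ⇑f '' (T \ {tstar}) = Metric.ball z ε \ {f tstar} := by
    rw [Set.image_diff hf, Set.image_singleton, hTdef, Set.image_preimage_eq_of_subset hballr]
  have hpre : IsPreconnected (T \ {tstar}) := by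
    have hemb := f.continuous.isClosedEmbedding hf
    have := hemb.toIsEmbedding.toIsInducing.isPreconnected_image (s := T \ {tstar})
    rw [himg] at this
    exact this.mp (punctured_ball_preconnected z (f tstar) hε)
  have hpre2 : IsPreconnected (Subtype.val '' (T \ {tstar}) : Set ℝ) :=
    hpre.image _ continuous_subtype_val.continuousOn
  have hne1 : (⟨t1, hmt1⟩ : unitInterval) ≠ tstar := by
    intro hcon
    have : t1 = t := congrArg Subtype.val hcon
    rw [ht1def, htdef] at this; linarith
  have hne2 : (⟨t2, hmt2⟩ : unitInterval) ≠ tstar := by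
    intro hcon
    have : t2 = t := congrArg Subtype.val hcon
    rw [ht2def, htdef] at this; linarith
  have hm1 : t1 ∈ Subtype.val '' (T \ {tstar}) := ⟨⟨t1, hmt1⟩, ⟨ht1T, hne1⟩, rfl⟩
  have hm2 : t2 ∈ Subtype.val '' (T \ {tstar}) := ⟨⟨t2, hmt2⟩, ⟨ht2T, hne2⟩, rfl⟩
  have hsub := hpre2.Icc_subset hm1 hm2
  have htIcc : t ∈ Set.Icc t1 t2 := ⟨by rw [htdef, ht1def]; linarith, by rw [htdef, ht2def]; linarith⟩
  obtain ⟨r, hr, hrv⟩ := hsub htIcc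
  exact hr.2 (Subtype.ext hrv)

end ArcLemmas

lemma interior_biUnion_eq_empty {ι : Type*} {s : Set ι} (hs : s.Finite) {f : ι → Set (ℝ × ℝ)}
    (hc : ∀ i ∈ s, IsClosed (f i)) (hi : ∀ i ∈ s, interior (f i) = ∅) :
    interior (⋃ i ∈ s, f i) = ∅ := by
  revert hc hi
  refine Set.Finite.induction_on (motive := fun s _ => (∀ i ∈ s, IsClosed (f i)) →
    (∀ i ∈ s, interior (f i) = ∅) → interior (⋃ i ∈ s, f i) = ∅) s hs (by simp) ?_
  intro a s ha hsf ih hc hi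
  rw [Set.biUnion_insert,
    interior_union_isClosed_of_interior_empty (hc a (Set.mem_insert _ _))
      (ih (fun i hi' => hc i (Set.mem_insert_of_mem _ hi'))
          (fun i hi' => hi i (Set.mem_insert_of_mem _ hi')))]
  exact hi a (Set.mem_insert _ _)

lemma mem_support_of_mem_edges'' {v w : V} {P : G.Walk v w} {e : Sym2 V} (he : e ∈ P.edges)
    {x : V} (hx : x ∈ e) : x ∈ P.support := by
  induction e using Sym2.ind with
  | _ a b =>
    rcases Sym2.mem_iff.mp hx with rfl | rfl
    · exact P.fst_mem_support_of_mem_edges he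
    · exact P.snd_mem_support_of_mem_edges he

lemma curve_closed_interior (emb : PlaneEmb G) {e : Sym2 V} (he : e ∈ G.edgeSet) :
    IsClosed (emb.curve e) ∧ interior (emb.curve e) = ∅ := by
  induction e using Sym2.ind with
  | _ a b =>
    obtain ⟨p, hpinj, hrange⟩ := emb.curve_path a b (G.mem_edgeSet.mp he)
    rw [← hrange]
    exact ⟨(isCompact_range p.continuous).isClosed, arc_interior_empty p hpinj⟩

/-- The degenerate region whose area is just the drawing of the path `P`. -/
def regionArea (emb : PlaneEmb G) {v w : V} (P : G.Walk v w) : Set (ℝ × ℝ) :=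
  ⋃ e ∈ {e : Sym2 V | e ∈ P.edges ∨ e ∈ P.edges}, emb.curve e

lemma mem_regionArea (emb : PlaneEmb G) {v w : V} {P : G.Walk v w} {e : Sym2 V}
    (he : e ∈ P.edges) {pt : ℝ × ℝ} (h : pt ∈ emb.curve e) : pt ∈ regionArea emb P :=
  Set.mem_biUnion (Or.inl he) h

lemma endpoints_mem_curve (emb : PlaneEmb G) {a b : V} (h : G.Adj a b) :
    emb.pos a ∈ emb.curve s(a, b) ∧ emb.pos b ∈ emb.curve s(a, b) := by
  obtain ⟨p, _, hrange⟩ := emb.curve_path a b h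
  exact ⟨hrange ▸ ⟨0, p.source⟩, hrange ▸ ⟨1, p.target⟩⟩

lemma mem_vertsOf_of_walk {emb : PlaneEmb G} {D : Set V} {S : Set (RegionAt emb)}
    (hmax : IsMaxDecomp D S) {v w : V} (P : G.Walk v w) (hP : P.IsPath)
    (hlen : P.length ≤ 3) (hvD : v ∈ D) (hwD : w ∈ D)
    (hDsup : ∀ x, x ∈ P.support → x ∈ D → x = v ∨ x = w)
    (hvA : emb.pos v ∈ regionArea emb P) (hwA : emb.pos w ∈ regionArea emb P)
    {u : V} (huA : emb.pos u ∈ regionArea emb P) : u ∈ vertsOf S := by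
  have hSfin : ({e : Sym2 V | e ∈ P.edges ∨ e ∈ P.edges} : Set (Sym2 V)).Finite := by
    have heq : {e : Sym2 V | e ∈ P.edges ∨ e ∈ P.edges} = {e : Sym2 V | e ∈ P.edges} := by
      ext e; simp
    rw [heq]; exact P.edges.finite_toSet
  have hcl : ∀ e ∈ {e : Sym2 V | e ∈ P.edges ∨ e ∈ P.edges}, IsClosed (emb.curve e) :=
    fun e he => (curve_closed_interior emb (P.edges_subset_edgeSet (he.elim id id))).1
  have hie : ∀ e ∈ {e : Sym2 V | e ∈ P.edges ∨ e ∈ P.edges}, interior (emb.curve e) = ∅ :=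
    fun e he => (curve_closed_interior emb (P.edges_subset_edgeSet (he.elim id id))).2
  have hAclosed : IsClosed (regionArea emb P) := hSfin.isClosed_biUnion hcl
  have hAint : interior (regionArea emb P) = ∅ := interior_biUnion_eq_empty hSfin hcl hie
  have hsupp : ∀ x : V, emb.pos x ∈ regionArea emb P → x ∈ P.support := by
    intro x hx
    obtain ⟨e, he, hxe⟩ := Set.mem_iUnion₂.mp hx
    have he' : e ∈ P.edges := he.elim id id
    exact mem_support_of_mem_edges'' he' (emb.curve_vert e (P.edges_subset_edgeSet he') x hxe)
  let r0 : RegionAt emb := ⟨v, w,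
    { p1 := P, p2 := P, p1_path := hP, p2_path := hP, p1_len := hlen, p2_len := hlen,
      area := regionArea emb P, area_closed := hAclosed,
      boundary_eq := by rw [hAclosed.frontier_eq, hAint, Set.diff_empty]; rfl,
      boundary_sub := le_refl _,
      endpoints_mem := ⟨hvA, hwA⟩,
      inner_nbr := fun x hx hs1 _ => absurd (hsupp x hx) hs1 }⟩
  have hr0area : r0.R.area = regionArea emb P := rfl
  have hdec : IsDecomp D (insert r0 S) := by
    constructor
    · intro r hr
      rcases Set.mem_insert_iff.mp hr with rfl | hr
      · exact ⟨hvD, hwD⟩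
      · exact hmax.1.endpoints r hr
    · intro r hr
      rcases Set.mem_insert_iff.mp hr with rfl | hr
      · rintro x ⟨hx1, hx2⟩
        rcases hDsup x (hsupp x hx1) hx2 with rfl | rfl
        · exact Or.inl rfl
        · exact Or.inr rfl
      · exact hmax.1.no_inner r hr
    · intro r hr r' hr' hne
      rcases Set.mem_insert_iff.mp hr with rfl | hr <;>
        rcases Set.mem_insert_iff.mp hr' with rfl | hr'
      · exact absurd rfl hne
      · rw [hr0area, hAint, Set.empty_inter]
      · rw [hr0area, hAint, Set.inter_empty]
      · exact hmax.1.noncross r hr r' hr' hne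
  exact hmax.2 r0 hdec (Set.mem_biUnion (Set.mem_insert r0 S) huA)

theorem stmt_14 (hred : Reduced G) (emb : PlaneEmb G) (D : Set V)
    (hD : IsDomSet G D) (S : Set (RegionAt emb)) (hmax : IsMaxDecomp D S)
    (v : V) (hv : v ∈ D) (u : V) (hu : u ∈ N1 G v) :
    u ∈ vertsOf S := by
  have hvu : G.Adj v u := hu.1
  by_cases huD : u ∈ D
  · -- region along the edge v-u
    let P : G.Walk v u := SimpleGraph.Walk.cons hvu SimpleGraph.Walk.nil
    have hP : P.IsPath := by
      rw [SimpleGraph.Walk.isPath_def]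
      simp [P, hvu.ne]
    have he : s(v, u) ∈ P.edges := by simp [P]
    refine mem_vertsOf_of_walk hmax P hP (by simp [P]) hv huD ?_
      (mem_regionArea emb he (endpoints_mem_curve emb hvu).1)
      (mem_regionArea emb he (endpoints_mem_curve emb hvu).2)
      (mem_regionArea emb he (endpoints_mem_curve emb hvu).2)
    intro x hx _
    simpa [P] using hx
  · obtain ⟨t, ht⟩ := hu.2
    have hut : G.Adj u t := ht.1
    have htv : t ≠ v := fun h => ht.2 (by rw [h]; exact Set.mem_insert v _)
    have hvtn : ¬ G.Adj v t := fun h => ht.2 (Set.mem_insert_of_mem _ h)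
    by_cases htD : t ∈ D
    · -- region along the path v-u-t
      let P : G.Walk v t := SimpleGraph.Walk.cons hvu
        (SimpleGraph.Walk.cons hut SimpleGraph.Walk.nil)
      have hP : P.IsPath := by
        rw [SimpleGraph.Walk.isPath_def]
        simp [P, hvu.ne, htv.symm, hut.ne]
      have he1 : s(v, u) ∈ P.edges := by simp [P]
      have he2 : s(u, t) ∈ P.edges := by simp [P]
      refine mem_vertsOf_of_walk hmax P hP (by simp [P]) hv htD ?_
        (mem_regionArea emb he1 (endpoints_mem_curve emb hvu).1)
        (mem_regionArea emb he2 (endpoints_mem_curve emb hut).2)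
        (mem_regionArea emb he1 (endpoints_mem_curve emb hvu).2)
      intro x hx hxD
      have : x = v ∨ x = u ∨ x = t := by simpa [P] using hx
      rcases this with rfl | rfl | rfl
      · exact Or.inl rfl
      · exact absurd hxD huD
      · exact Or.inr rfl
    · -- region along the path v-u-t-w where w ∈ D dominates t
      obtain ⟨w, hwD, htw⟩ := hD t htD
      have hwv : w ≠ v := fun h => hvtn (by rw [← h]; exact htw.symm)
      have hwu : w ≠ u := fun h => huD (h ▸ hwD)
      let P : G.Walk v w := SimpleGraph.Walk.cons hvu
        (SimpleGraph.Walk.cons hut (SimpleGraph.Walk.cons htw SimpleGraph.Walk.nil))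
      have hP : P.IsPath := by
        rw [SimpleGraph.Walk.isPath_def]
        simp [P, hvu.ne, htv.symm, hut.ne, hwv.symm, hwu.symm, htw.ne]
      have he1 : s(v, u) ∈ P.edges := by simp [P]
      have he3 : s(t, w) ∈ P.edges := by simp [P]
      refine mem_vertsOf_of_walk hmax P hP (by simp [P]) hv hwD ?_
        (mem_regionArea emb he1 (endpoints_mem_curve emb hvu).1)
        (mem_regionArea emb he3 (endpoints_mem_curve emb htw).2)
        (mem_regionArea emb he1 (endpoints_mem_curve emb hvu).2)
      intro x hx hxD
      have : x = v ∨ x = u ∨ x = t ∨ x = w := by simpa [P] using hx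
      rcases this with rfl | rfl | rfl | rfl
      · exact Or.inl rfl
      · exact absurd hxD huD
      · exact absurd hxD htD
      · exact Or.inr rfl
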